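/- Let N ⊂ ℝ² be a parallelogram centered at the origin formed by two congruent triangles K₁, K₂ sharing a diagonal. Let r : ℝ² → ℝ² be a linear (affine with r(0) = 0) vector field. Define Π r piecewise on each K_i as the unique function in RT(K_i) = (P₀(K_i))² + x P₀(K_i) whose normal components have the same edge averages as r on each edge of K_i. Then ∫_N (r − Π r) dx = 0. -/

import Mathlib

open MeasureTheory

/-- The lowest-order Raviart–Thomas edge degree-of-freedom condition: the
integral over the segment `[P, Q]` of the normal component of `q` vanishes
(the normal being the rotation of `Q - P`). -/
noncomputable def edgeCond (q : ℝ × ℝ → ℝ × ℝ) (P Q : ℝ × ℝ) : Prop :=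
  ∫ t in (0 : ℝ)..1,
      ((q (P + t • (Q - P))).1 * (-(Q - P).2) +
        (q (P + t • (Q - P))).2 * (Q - P).1) = 0

/-- A field of the lowest-order Raviart–Thomas shape space `a + c • x`. -/
def IsRT (p : ℝ × ℝ → ℝ × ℝ) : Prop :=
  ∃ (a : ℝ × ℝ) (c : ℝ), p = fun x => a + c • x

lemma integral_affine (u v : ℝ) : ∫ t in (0:ℝ)..1, (u + t*v) = u + v/2 := by
  rw [intervalIntegral.integral_add (continuous_const.intervalIntegrable _ _)
    ((show Continuous (fun t : ℝ => t * v) from continuous_id'.mul continuous_const).intervalIntegrable _ _)]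
  simp [intervalIntegral.integral_mul_const, integral_id]
  ring

lemma edge_eq (a : ℝ × ℝ) (c : ℝ) (r : (ℝ × ℝ) →ₗ[ℝ] (ℝ × ℝ)) (P Q : ℝ × ℝ)
    (h : edgeCond (fun x => (a + c • x) - r x) P Q) :
    (2*a.1 + c*(P.1+Q.1) - (r P).1 - (r Q).1) * (-(Q.2 - P.2))
      + (2*a.2 + c*(P.2+Q.2) - (r P).2 - (r Q).2) * (Q.1 - P.1) = 0 := by
  unfold edgeCond at h
  have hfun : (fun t : ℝ =>
      (((fun x => (a + c • x) - r x) (P + t • (Q - P))).1 * (-(Q - P).2) +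
        ((fun x => (a + c • x) - r x) (P + t • (Q - P))).2 * (Q - P).1))
      = fun t : ℝ =>
        ((a.1 + c*P.1 - (r P).1) * (-(Q.2-P.2)) + (a.2 + c*P.2 - (r P).2) * (Q.1-P.1))
        + t * ((c*(Q.1-P.1) - (r (Q-P)).1) * (-(Q.2-P.2)) + (c*(Q.2-P.2) - (r (Q-P)).2) * (Q.1-P.1)) := by
    funext t
    simp only [map_add, _root_.map_smul, LinearMap.map_smul, Prod.fst_add, Prod.snd_add,
      Prod.smul_fst, Prod.smul_snd, Prod.fst_sub, Prod.snd_sub, smul_eq_mul]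
    ring
  rw [hfun, integral_affine] at h
  have h1 : (r (Q - P)).1 = (r Q).1 - (r P).1 := by rw [map_sub]; rfl
  have h2 : (r (Q - P)).2 = (r Q).2 - (r P).2 := by rw [map_sub]; rfl
  rw [h1, h2] at h
  linarith [h]

lemma exists_smul_of_cross (v B : ℝ × ℝ) (hB : B ≠ 0) (hc : v.1 * B.2 - v.2 * B.1 = 0) :
    ∃ t : ℝ, v = t • B := by
  by_cases h1 : B.1 = 0
  · have h2 : B.2 ≠ 0 := fun h2 => hB (Prod.ext h1 h2)
    have hv1 : v.1 = 0 := by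
      rw [h1, mul_zero] at hc
      rcases mul_eq_zero.mp (by linarith : v.1 * B.2 = 0) with h | h
      · exact h
      · exact absurd h h2
    exact ⟨v.2 / B.2, Prod.ext (by simp [h1, hv1]) (by simp; field_simp)⟩
  · refine ⟨v.1 / B.1, Prod.ext (by simp; field_simp) ?_⟩
    simp only [Prod.smul_snd, smul_eq_mul]
    field_simp
    linarith

lemma cross_ne (A B : ℝ × ℝ) (hnd : ¬ Collinear ℝ ({A, B, -B} : Set (ℝ × ℝ))) :
    A.1 * B.2 - A.2 * B.1 ≠ 0 := by
  intro hc
  apply hnd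
  rw [collinear_iff_exists_forall_eq_smul_vadd]
  by_cases hB : B = (0 : ℝ × ℝ)
  · refine ⟨0, A, fun p hp => ?_⟩
    simp only [Set.mem_insert_iff, Set.mem_singleton_iff] at hp
    rcases hp with rfl | rfl | rfl
    · exact ⟨1, by simp⟩
    · exact ⟨0, by simp [hB]⟩
    · exact ⟨0, by simp [hB]⟩
  · obtain ⟨t, ht⟩ := exists_smul_of_cross A B hB hc
    refine ⟨0, B, fun p hp => ?_⟩
    simp only [Set.mem_insert_iff, Set.mem_singleton_iff] at hp
    rcases hp with rfl | rfl | rfl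
    · exact ⟨t, by simp [ht]⟩
    · exact ⟨1, by simp⟩
    · exact ⟨-1, by simp⟩

/-- Let `N` be the parallelogram centered at the origin formed by the triangles
`K₁ = conv{A, B, -B}` and `K₂ = conv{-A, -B, B}` sharing the diagonal `[B,-B]`,
let `r` be a linear vector field, and let `Pi₁, Pi₂` be its lowest-order
Raviart–Thomas interpolants on `K₁, K₂` (normal edge averages agree with `r`).
Then `∫_N (r - Π r) dx = 0`. -/
theorem stmt9 (A B : ℝ × ℝ) (hnd : ¬ Collinear ℝ ({A, B, -B} : Set (ℝ × ℝ)))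
    (r : (ℝ × ℝ) →ₗ[ℝ] (ℝ × ℝ))
    (Pi₁ Pi₂ : ℝ × ℝ → ℝ × ℝ) (hPi₁ : IsRT Pi₁) (hPi₂ : IsRT Pi₂)
    (he₁ : edgeCond (fun x => Pi₁ x - r x) A B)
    (he₂ : edgeCond (fun x => Pi₁ x - r x) B (-B))
    (he₃ : edgeCond (fun x => Pi₁ x - r x) (-B) A)
    (hf₁ : edgeCond (fun x => Pi₂ x - r x) (-A) (-B))
    (hf₂ : edgeCond (fun x => Pi₂ x - r x) (-B) B)
    (hf₃ : edgeCond (fun x => Pi₂ x - r x) B (-A)) :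
    (∫ x in convexHull ℝ ({A, B, -B} : Set (ℝ × ℝ)), (r x - Pi₁ x)) +
      (∫ x in convexHull ℝ ({-A, -B, B} : Set (ℝ × ℝ)), (r x - Pi₂ x)) = 0 := by
  obtain ⟨a₁, c₁, rfl⟩ := hPi₁
  obtain ⟨a₂, c₂, rfl⟩ := hPi₂
  have E1 := edge_eq a₁ c₁ r A B he₁
  have E2 := edge_eq a₁ c₁ r B (-B) he₂
  have E3 := edge_eq a₁ c₁ r (-B) A he₃
  have F1 := edge_eq a₂ c₂ r (-A) (-B) hf₁
  have F2 := edge_eq a₂ c₂ r (-B) B hf₂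
  have F3 := edge_eq a₂ c₂ r B (-A) hf₃
  simp only [map_neg, Prod.fst_neg, Prod.snd_neg] at E1 E2 E3 F1 F2 F3
  have hAB := cross_ne A B hnd
  -- midedge cross equations
  have g2 : a₁.1 * B.2 - a₁.2 * B.1 = 0 := by linear_combination E2 / 4
  have g2' : a₂.1 * B.2 - a₂.2 * B.1 = 0 := by linear_combination -F2 / 4
  have g1 : (B.1-A.1)*(a₁.2+a₂.2) - (B.2-A.2)*(a₁.1+a₂.1)
      + (c₁-c₂)*(B.1*A.2 - B.2*A.1) = 0 := by linear_combination (E1 - F1)/2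
  have g3 : (A.1+B.1)*(a₁.2+a₂.2) - (A.2+B.2)*(a₁.1+a₂.1)
      + (c₁-c₂)*(B.1*A.2 - B.2*A.1) = 0 := by linear_combination (E3 - F3)/2
  have crA : (a₁.1+a₂.1)*A.2 - (a₁.2+a₂.2)*A.1 = 0 := by linear_combination (g1-g3)/2
  have crB : (a₁.1+a₂.1)*B.2 - (a₁.2+a₂.2)*B.1 = 0 := by linear_combination g2 + g2'
  have hd0 : (c₁-c₂)*(A.1*B.2 - A.2*B.1) = 0 := by linear_combination crA - crB - g1
  have hs1 : (a₁.1+a₂.1)*(A.1*B.2 - A.2*B.1) = 0 := by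
    linear_combination A.1 * crB - B.1 * crA
  have hs2 : (a₁.2+a₂.2)*(A.1*B.2 - A.2*B.1) = 0 := by
    linear_combination A.2 * crB - B.2 * crA
  have hc : c₂ = c₁ := by
    rcases mul_eq_zero.mp hd0 with h | h
    · linarith
    · exact absurd h hAB
  have ha : a₂ = -a₁ := by
    apply Prod.ext
    · rcases mul_eq_zero.mp hs1 with h | h
      · simp only [Prod.fst_neg]; linarith
      · exact absurd h hAB
    · rcases mul_eq_zero.mp hs2 with h | h
      · simp only [Prod.snd_neg]; linarith
      · exact absurd h hAB
  subst hc ha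
  have hset : ({-A, -B, B} : Set (ℝ × ℝ)) = -({A, B, -B} : Set (ℝ × ℝ)) := by
    ext x
    simp only [Set.mem_insert_iff, Set.mem_singleton_iff, Set.mem_neg]
    constructor
    · rintro (rfl | rfl | rfl) <;> simp
    · rintro (h | h | h)
      · exact Or.inl (neg_eq_iff_eq_neg.mp h)
      · exact Or.inr (Or.inl (neg_eq_iff_eq_neg.mp h))
      · exact Or.inr (Or.inr (neg_inj.mp h))
  have key : (∫ x in convexHull ℝ ({-A, -B, B} : Set (ℝ × ℝ)),
        (r x - ((fun x => -a₁ + c₂ • x) x)))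
      = - ∫ x in convexHull ℝ ({A, B, -B} : Set (ℝ × ℝ)),
        (r x - ((fun x => a₁ + c₂ • x) x)) := by
    rw [hset, convexHull_neg]
    have hpre : -(convexHull ℝ ({A, B, -B} : Set (ℝ × ℝ)))
        = Neg.neg ⁻¹' (convexHull ℝ ({A, B, -B} : Set (ℝ × ℝ))) := rfl
    rw [hpre]
    have hmp := (Measure.measurePreserving_neg (volume : Measure (ℝ × ℝ))).setIntegral_preimage_emb
      (Homeomorph.neg (ℝ × ℝ)).measurableEmbedding
      (fun y => -(r y - (a₁ + c₂ • y))) (convexHull ℝ ({A, B, -B} : Set (ℝ × ℝ)))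
    have hint : (fun x : ℝ × ℝ => r x - ((fun x => -a₁ + c₂ • x) x))
        = fun x : ℝ × ℝ => -(r (-x) - (a₁ + c₂ • -x)) := by
      funext x
      simp only [map_neg, smul_neg]
      abel
    rw [hint, hmp, integral_neg]
  rw [key]
  exact add_neg_cancel _
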